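/- (a) The set {(M : G) : M ∈ max R} coincides with G-max R, the set of maximal proper G-ideals of R. (b) If G is a Zariski-closed subgroup of H, then for maximal ideals M, M' of R one has (M : G) = (M' : G) if and only if M' = g(M) for some g ∈ G; that is, the fibers of the map max R → G-max R, M ↦ (M : G), are exactly the G-orbits in max R. -/

import Mathlib

/-- The character `α ↦ ∏ᵢ hᵢ^{αᵢ}` of `Γ = ℤⁿ` attached to `h ∈ (kˣ)ⁿ`. -/
def powChar {k : Type*} [Field k] {n : ℕ} (h : Fin n → kˣ) :
    Multiplicative (Fin n → ℤ) →* kˣ where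
  toFun α := ∏ i, h i ^ (Multiplicative.toAdd α i)
  map_one' := by simp
  map_mul' a b := by
    simp [toAdd_mul, Pi.add_apply, zpow_add, Finset.prod_mul_distrib]

/-- Auxiliary monoid homomorphism `α ↦ χ(α) yᵅ` into the Laurent polynomial ring
`kΓ = k[y₁^{±1},…,yₙ^{±1}]` (realized as the group algebra of `Γ = ℤⁿ`). -/
noncomputable def scaleMonHom {k : Type*} [Field k] {n : ℕ}
    (χ : Multiplicative (Fin n → ℤ) →* kˣ) :
    Multiplicative (Fin n → ℤ) →* AddMonoidAlgebra k (Fin n → ℤ) where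
  toFun α := ((χ α : k)) • AddMonoidAlgebra.of k (Fin n → ℤ) α
  map_one' := by
    show (↑(χ 1) : k) • (AddMonoidAlgebra.of k (Fin n → ℤ)) 1 = 1
    rw [map_one, map_one, Units.val_one, one_smul]
  map_mul' a b := by
    show (↑(χ (a * b)) : k) • (AddMonoidAlgebra.of k (Fin n → ℤ)) (a * b)
      = ((↑(χ a) : k) • (AddMonoidAlgebra.of k (Fin n → ℤ)) a) *
        ((↑(χ b) : k) • (AddMonoidAlgebra.of k (Fin n → ℤ)) b)
    rw [map_mul, map_mul, Units.val_mul, smul_mul_smul_comm]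

/-- The `k`-algebra automorphism of the Laurent polynomial ring scaling the monomial
`yᵅ` by `χ(α)`, for a character `χ : Γ → kˣ`. -/
noncomputable def lactM {k : Type*} [Field k] {n : ℕ}
    (χ : Multiplicative (Fin n → ℤ) →* kˣ) :
    AddMonoidAlgebra k (Fin n → ℤ) →ₐ[k] AddMonoidAlgebra k (Fin n → ℤ) :=
  AddMonoidAlgebra.lift k _ (Fin n → ℤ) (scaleMonHom χ)

/-- The action of `h ∈ H = (kˣ)ⁿ` on the Laurent polynomial ring, `yᵢ ↦ hᵢ yᵢ`. -/
noncomputable def lact {k : Type*} [Field k] {n : ℕ} (h : Fin n → kˣ) :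
    AddMonoidAlgebra k (Fin n → ℤ) →ₐ[k] AddMonoidAlgebra k (Fin n → ℤ) :=
  lactM (powChar h)

/-- `(I : G) = ⋂_{g ∈ G} g(I)` for a subgroup `G ≤ H = (kˣ)ⁿ`. -/
noncomputable def resL {k : Type*} [Field k] {n : ℕ} (G : Subgroup (Fin n → kˣ))
    (I : Ideal (AddMonoidAlgebra k (Fin n → ℤ))) : Ideal (AddMonoidAlgebra k (Fin n → ℤ)) :=
  ⨅ g ∈ G, Ideal.comap (lact g) I

/-- A `G`-ideal of the Laurent polynomial ring. -/
def IsGIdealL {k : Type*} [Field k] {n : ℕ} (G : Subgroup (Fin n → kˣ))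
    (I : Ideal (AddMonoidAlgebra k (Fin n → ℤ))) : Prop :=
  ∀ g ∈ G, Ideal.comap (lact g) I = I



namespace Stmt7Aux

variable {k : Type*} [Field k] {n : ℕ}

abbrev RL (k : Type*) [Field k] (n : ℕ) := AddMonoidAlgebra k (Fin n → ℤ)

/-- Evaluation at a point of the torus. -/
noncomputable def evL (p : Fin n → kˣ) : RL k n →ₐ[k] k :=
  AddMonoidAlgebra.lift k k (Fin n → ℤ) ((Units.coeHom k).comp (powChar p))

lemma evL_of (p : Fin n → kˣ) (α : Multiplicative (Fin n → ℤ)) :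
    evL p (AddMonoidAlgebra.of k (Fin n → ℤ) α) = ((powChar p α : kˣ) : k) :=
  AddMonoidAlgebra.lift_of _ _

lemma powChar_mul_point (g p : Fin n → kˣ) (α : Multiplicative (Fin n → ℤ)) :
    powChar (g * p) α = powChar g α * powChar p α := by
  show (∏ i, (g i * p i) ^ (Multiplicative.toAdd α i)) = _
  simp [powChar, mul_zpow, Finset.prod_mul_distrib]

lemma lact_of (g : Fin n → kˣ) (α : Multiplicative (Fin n → ℤ)) :
    lact g (AddMonoidAlgebra.of k (Fin n → ℤ) α)
      = ((powChar g α : kˣ) : k) • AddMonoidAlgebra.of k (Fin n → ℤ) α :=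
  AddMonoidAlgebra.lift_of _ _

lemma evL_lact (p g : Fin n → kˣ) (f : RL k n) :
    evL p (lact g f) = evL (g * p) f := by
  have h : (evL p).comp (lact g) = evL (g * p) := by
    apply AddMonoidAlgebra.algHom_ext
    intro x
    have hx : (AddMonoidAlgebra.single x 1 : RL k n)
        = AddMonoidAlgebra.of k (Fin n → ℤ) (Multiplicative.ofAdd x) := rfl
    simp only [AlgHom.comp_apply, hx, lact_of, evL_of, map_smul, smul_eq_mul,
      powChar_mul_point, Units.val_mul]
    exact Subsingleton.elim _ _
  exact DFunLike.congr_fun h f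

end Stmt7Aux

open Stmt7Aux in
section
variable {k : Type*} [Field k] {n : ℕ}

namespace Stmt7Aux2

/-- inversion automorphism yᵅ ↦ y⁻ᵅ -/
noncomputable def invL (k : Type*) [Field k] (n : ℕ) : RL k n →ₐ[k] RL k n :=
  AddMonoidAlgebra.lift k _ (Fin n → ℤ)
    ((AddMonoidAlgebra.of k (Fin n → ℤ)).comp invMonoidHom)

lemma powChar_inv (p : Fin n → kˣ) (α : Multiplicative (Fin n → ℤ)) :
    powChar p α⁻¹ = powChar p⁻¹ α := by
  show (∏ i, p i ^ (Multiplicative.toAdd α⁻¹ i)) = ∏ i, (p⁻¹ i) ^ (Multiplicative.toAdd α i)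
  refine Finset.prod_congr rfl fun i _ => ?_
  have : Multiplicative.toAdd α⁻¹ i = -(Multiplicative.toAdd α i) := rfl
  rw [this, zpow_neg]
  simp [inv_zpow]

lemma evL_invL (p : Fin n → kˣ) (f : RL k n) :
    Stmt7Aux.evL p (invL k n f) = Stmt7Aux.evL p⁻¹ f := by
  have h : (Stmt7Aux.evL p).comp (invL k n) = Stmt7Aux.evL (p⁻¹ : Fin n → kˣ) := by
    apply AddMonoidAlgebra.algHom_ext
    intro x
    have hx : (AddMonoidAlgebra.single x 1 : RL k n)
        = AddMonoidAlgebra.of k (Fin n → ℤ) (Multiplicative.ofAdd x) := rfl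
    simp only [AlgHom.comp_apply, hx]
    rw [show invL k n (AddMonoidAlgebra.of k (Fin n → ℤ) (Multiplicative.ofAdd x))
        = AddMonoidAlgebra.of k (Fin n → ℤ) ((Multiplicative.ofAdd x)⁻¹) from
      AddMonoidAlgebra.lift_of _ _]
    rw [Stmt7Aux.evL_of, Stmt7Aux.evL_of, powChar_inv]
    exact Subsingleton.elim _ _
  exact DFunLike.congr_fun h f

/-- expansion of a character of ℤⁿ in terms of its values on basis vectors -/
lemma char_eq_prod (φ : Multiplicative (Fin n → ℤ) →* kˣ) (x : Fin n → ℤ) :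
    φ (Multiplicative.ofAdd x)
      = ∏ i, φ (Multiplicative.ofAdd (Pi.single i 1)) ^ (x i) := by
  have hx : Multiplicative.ofAdd x
      = ∏ i, (Multiplicative.ofAdd (Pi.single i (1:ℤ))) ^ (x i) := by
    apply Multiplicative.toAdd.injective
    rw [toAdd_prod]
    simp only [toAdd_zpow, toAdd_ofAdd]
    ext j
    simp [Pi.single_apply, Finset.sum_ite_eq' , mul_comm]
  rw [hx, map_prod]
  simp [map_zpow]

end Stmt7Aux2
end

namespace Stmt7Aux3
open Stmt7Aux Stmt7Aux2

variable {k : Type*} [Field k] {n : ℕ}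

noncomputable def MxL (p : Fin n → kˣ) : Ideal (RL k n) := RingHom.ker (evL p)

lemma mem_MxL (p : Fin n → kˣ) (f : RL k n) : f ∈ MxL p ↔ evL p f = 0 :=
  RingHom.mem_ker

lemma evL_surjective (p : Fin n → kˣ) : Function.Surjective (evL p : RL k n →ₐ[k] k) :=
  fun c => ⟨algebraMap k (RL k n) c, (evL p).commutes c⟩

lemma MxL_isMaximal (p : Fin n → kˣ) : (MxL (k := k) p).IsMaximal :=
  RingHom.ker_isMaximal_of_surjective _ (evL_surjective p)

lemma comap_lact_MxL (g p : Fin n → kˣ) :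
    Ideal.comap (lact g) (MxL p) = MxL (g * p) := by
  ext f
  simp [Ideal.mem_comap, mem_MxL, evL_lact]

instance : AddMonoid.FG (Fin n → ℤ) :=
  AddGroup.fg_iff_addMonoid_fg.mp (Module.Finite.iff_addGroup_fg.mp inferInstance)

/-- an algebra homomorphism to `k` is evaluation at a point -/
lemma algHom_eq_evL (ψ : RL k n →ₐ[k] k) : ∃ p : Fin n → kˣ, ψ = evL p := by
  let m : Multiplicative (Fin n → ℤ) →* k :=
    (ψ.toRingHom.toMonoidHom).comp (AddMonoidAlgebra.of k (Fin n → ℤ))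
  let φ : Multiplicative (Fin n → ℤ) →* kˣ := MonoidHom.toHomUnits m
  refine ⟨fun i => φ (Multiplicative.ofAdd (Pi.single i 1)), ?_⟩
  apply AddMonoidAlgebra.algHom_ext
  intro x
  show ψ (AddMonoidAlgebra.of k (Fin n → ℤ) (Multiplicative.ofAdd x))
      = evL _ (AddMonoidAlgebra.of k (Fin n → ℤ) (Multiplicative.ofAdd x))
  rw [evL_of]
  have h1 : ψ (AddMonoidAlgebra.of k (Fin n → ℤ) (Multiplicative.ofAdd x))
      = ((φ (Multiplicative.ofAdd x) : kˣ) : k) := rfl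
  rw [h1]
  congr 1
  rw [char_eq_prod φ x]
  show (∏ i, φ (Multiplicative.ofAdd (Pi.single i 1)) ^ x i) = _
  rfl
  exact Subsingleton.elim _ _

lemma exists_MxL [IsAlgClosed k] (M : Ideal (RL k n)) (hM : M.IsMaximal) :
    ∃ p : Fin n → kˣ, M = MxL p := by
  haveI := hM
  haveI hft : Algebra.FiniteType k (RL k n ⧸ M) :=
    Algebra.FiniteType.of_surjective (Ideal.Quotient.mkₐ k M)
      (Ideal.Quotient.mkₐ_surjective k M)
  letI : Field (RL k n ⧸ M) := Ideal.Quotient.field M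
  haveI : Module.Finite k (RL k n ⧸ M) := finite_of_finite_type_of_isJacobsonRing k _
  haveI : Algebra.IsIntegral k (RL k n ⧸ M) := Algebra.IsIntegral.of_finite k _
  have hsurj : Function.Surjective (algebraMap k (RL k n ⧸ M)) :=
    IsAlgClosed.algebraMap_bijective_of_isIntegral.2
  have hbij : Function.Bijective (Algebra.ofId k (RL k n ⧸ M)) :=
    ⟨fun a b hab => by
        exact (algebraMap k (RL k n ⧸ M)).injective hab, hsurj⟩
  let e : k ≃ₐ[k] (RL k n ⧸ M) := AlgEquiv.ofBijective (Algebra.ofId k _) hbij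
  let ψ : RL k n →ₐ[k] k := e.symm.toAlgHom.comp (Ideal.Quotient.mkₐ k M)
  obtain ⟨p, hp⟩ := algHom_eq_evL ψ
  refine ⟨p, ?_⟩
  have hker : RingHom.ker ψ = M := by
    ext f
    constructor
    · intro hf
      have : e.symm (Ideal.Quotient.mkₐ k M f) = 0 := hf
      have h0 : Ideal.Quotient.mkₐ k M f = 0 := by
        apply e.symm.injective
        rw [this, map_zero]
      simpa [Ideal.Quotient.eq_zero_iff_mem] using h0
    · intro hf
      show e.symm (Ideal.Quotient.mkₐ k M f) = 0
      have : Ideal.Quotient.mkₐ k M f = 0 := by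
        simpa [Ideal.Quotient.eq_zero_iff_mem] using hf
      rw [this, map_zero]
  rw [← hker, hp]; rfl

end Stmt7Aux3

namespace Stmt7Aux4
open Stmt7Aux Stmt7Aux2 Stmt7Aux3

variable {k : Type*} [Field k] {n : ℕ} (G : Subgroup (Fin n → kˣ))

lemma mem_resL_MxL (p : Fin n → kˣ) (f : RL k n) :
    f ∈ resL G (MxL p) ↔ ∀ g ∈ G, evL (g * p) f = 0 := by
  simp only [resL, Ideal.mem_iInf, Ideal.mem_comap, mem_MxL, evL_lact]

/-- the "Zariski closure" of `G`, described pointwise. -/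
def CC (G : Subgroup (Fin n → kˣ)) : Set (Fin n → kˣ) :=
  {x | ∀ f : RL k n, (∀ g ∈ G, evL g f = 0) → evL x f = 0}

lemma G_subset_CC {g : Fin n → kˣ} (hg : g ∈ G) : g ∈ CC G := fun f hf => hf g hg

lemma CC_mul_left {g x : Fin n → kˣ} (hg : g ∈ G) (hx : x ∈ CC G) : g * x ∈ CC G := by
  intro f hf
  have h1 : ∀ g' ∈ G, evL g' (lact g f) = 0 := by
    intro g' hg'
    rw [evL_lact]
    exact hf (g * g') (mul_mem hg hg')
  have := hx (lact g f) h1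
  rwa [evL_lact] at this

lemma CC_mul {x y : Fin n → kˣ} (hx : x ∈ CC G) (hy : y ∈ CC G) : x * y ∈ CC G := by
  intro f hf
  have h1 : ∀ g ∈ G, evL g (lact x f) = 0 := by
    intro g hg
    rw [evL_lact]
    have : x * g ∈ CC G := by rw [mul_comm]; exact CC_mul_left G hg hx
    exact this f hf
  have := hy (lact x f) h1
  rwa [evL_lact] at this

lemma CC_inv {x : Fin n → kˣ} (hx : x ∈ CC G) : x⁻¹ ∈ CC G := by
  intro f hf
  have h1 : ∀ g ∈ G, evL g (Stmt7Aux2.invL k n f) = 0 := by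
    intro g hg
    rw [evL_invL]
    exact hf g⁻¹ (inv_mem hg)
  have := hx (Stmt7Aux2.invL k n f) h1
  rwa [evL_invL] at this

/-- translation: a point of the closure acts on vanishing conditions -/
lemma CC_translate {x : Fin n → kˣ} (hx : x ∈ CC G) (p : Fin n → kˣ) (f : RL k n)
    (hf : ∀ g ∈ G, evL (g * p) f = 0) : evL (x * p) f = 0 := by
  have h1 : ∀ g ∈ G, evL g (lact p f) = 0 := by
    intro g hg
    rw [evL_lact, mul_comm p g]
    exact hf g hg
  have := hx (lact p f) h1
  rwa [evL_lact, mul_comm p x] at this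

/-- if everything vanishing on `G⬝p` vanishes at `q`, then `q p⁻¹` is in the closure -/
lemma mem_CC_of_le {p q : Fin n → kˣ}
    (h : ∀ f : RL k n, (∀ g ∈ G, evL (g * p) f = 0) → evL q f = 0) :
    q * p⁻¹ ∈ CC G := by
  intro f hf
  have h1 : ∀ g ∈ G, evL (g * p) (lact p⁻¹ f) = 0 := by
    intro g hg
    rw [evL_lact]
    have : p⁻¹ * (g * p) = g := by rw [mul_comm g p, inv_mul_cancel_left]
    rw [this]
    exact hf g hg
  have := h (lact p⁻¹ f) h1
  rwa [evL_lact, mul_comm p⁻¹ q] at this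

/-- Core claim: if `resL G (MxL p) ≤ MxL q` then the restricted ideals agree. -/
lemma resL_eq_of_le {p q : Fin n → kˣ} (h : resL G (MxL p) ≤ MxL q) :
    resL G (MxL p) = resL G (MxL q) := by
  have h' : ∀ f : RL k n, (∀ g ∈ G, evL (g * p) f = 0) → evL q f = 0 := by
    intro f hf
    exact (mem_MxL q f).mp (h ((mem_resL_MxL G p f).mpr hf))
  have hc : q * p⁻¹ ∈ CC G := mem_CC_of_le G h'
  apply le_antisymm
  · intro f hf
    rw [mem_resL_MxL] at hf ⊢
    intro g hg
    have hgc : g * (q * p⁻¹) ∈ CC G := CC_mul_left G hg hc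
    have := CC_translate G hgc p f hf
    rwa [show g * (q * p⁻¹) * p = g * q by rw [mul_assoc, inv_mul_cancel_right]] at this
  · intro f hf
    rw [mem_resL_MxL] at hf ⊢
    intro g hg
    have hgc : g * (q * p⁻¹)⁻¹ ∈ CC G := CC_mul_left G hg (CC_inv G hc)
    have := CC_translate G hgc q f hf
    rwa [show g * (q * p⁻¹)⁻¹ * q = g * p by rw [mul_inv_rev, inv_inv, mul_assoc, inv_mul_cancel_right]] at this

/-- `resL G (MxL p)` only depends on the `G`-orbit of `p`. -/
lemma resL_MxL_mul {g : Fin n → kˣ} (hg : g ∈ G) (p : Fin n → kˣ) :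
    resL G (MxL (g * p)) = resL G (MxL p) := by
  ext f
  rw [mem_resL_MxL, mem_resL_MxL]
  constructor
  · intro h g' hg'
    have := h (g' * g⁻¹) (mul_mem hg' (inv_mem hg))
    rwa [show g' * g⁻¹ * (g * p) = g' * p by rw [← mul_assoc, inv_mul_cancel_right]] at this
  · intro h g' hg'
    have := h (g' * g) (mul_mem hg' hg)
    rwa [← mul_assoc]

lemma isGIdealL_resL_MxL (p : Fin n → kˣ) : IsGIdealL G (resL G (MxL p)) := by
  intro g hg
  ext f
  rw [Ideal.mem_comap, mem_resL_MxL, mem_resL_MxL]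
  constructor
  · intro h g' hg'
    have := h (g' * g⁻¹) (mul_mem hg' (inv_mem hg))
    rw [evL_lact] at this
    rwa [show g * (g' * g⁻¹ * p) = g' * p by rw [← mul_assoc, mul_comm g, inv_mul_cancel_right]] at this
  · intro h g' hg'
    rw [evL_lact]
    have := h (g * g') (mul_mem hg hg')
    rwa [← mul_assoc]

lemma resL_le_MxL (p : Fin n → kˣ) : resL G (MxL p) ≤ MxL (k := k) p := by
  intro f hf
  rw [mem_resL_MxL] at hf
  rw [mem_MxL]
  have := hf 1 (one_mem G)
  rwa [one_mul] at this

/-- any proper `G`-ideal is contained in some `resL G (MxL q)` -/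
lemma gIdeal_le_resL [IsAlgClosed k] {J : Ideal (RL k n)} (hJ : IsGIdealL G J)
    (hJt : J ≠ ⊤) : ∃ q : Fin n → kˣ, J ≤ resL G (MxL q) := by
  obtain ⟨M, hM, hle⟩ := Ideal.exists_le_maximal J hJt
  obtain ⟨q, rfl⟩ := exists_MxL M hM
  refine ⟨q, fun f hf => ?_⟩
  rw [mem_resL_MxL]
  intro g hg
  have hfg : lact g f ∈ J := by
    have := hJ g hg
    rw [← this] at hf
    exact hf
  have := hle hfg
  rw [mem_MxL] at this
  rwa [evL_lact] at this

end Stmt7Aux4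

namespace Stmt7Aux5
open Stmt7Aux Stmt7Aux2 Stmt7Aux3 Stmt7Aux4

variable {k : Type*} [Field k] {n : ℕ}

lemma powChar_single (p : Fin n → kˣ) (i : Fin n) :
    powChar p (Multiplicative.ofAdd (Pi.single i 1)) = p i := by
  have h0 : powChar p (Multiplicative.ofAdd (Pi.single i 1))
      = ∏ j, p j ^ ((Pi.single i 1 : Fin n → ℤ) j) := rfl
  rw [h0]
  rw [Finset.prod_eq_single i]
  · simp
  · intro j _ hj
    rw [Pi.single_eq_of_ne hj, zpow_zero]
  · intro h
    exact absurd (Finset.mem_univ i) h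

/-- The natural map from polynomials to Laurent polynomials. -/
noncomputable def theta (k : Type*) [Field k] (n : ℕ) :
    MvPolynomial (Fin n) k →ₐ[k] RL k n :=
  MvPolynomial.aeval (fun i =>
    AddMonoidAlgebra.of k (Fin n → ℤ) (Multiplicative.ofAdd (Pi.single i 1)))

lemma evL_theta (p : Fin n → kˣ) (f : MvPolynomial (Fin n) k) :
    evL p (theta k n f) = MvPolynomial.eval (fun i => ((p i : kˣ) : k)) f := by
  have h : (evL (k := k) p).comp (theta k n)
      = MvPolynomial.aeval (fun i => ((p i : kˣ) : k)) := by
    rw [theta, MvPolynomial.comp_aeval]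
    congr 1
    funext i
    rw [evL_of, powChar_single]
  have h2 := DFunLike.congr_fun h f
  simp only [AlgHom.comp_apply] at h2
  rw [h2, ← MvPolynomial.coe_aeval_eq_eval]
  rfl

/-- if `G` is Zariski closed then its closure `CC G` is `G` itself -/
lemma CC_subset_G (G : Subgroup (Fin n → kˣ))
    (E : Set (MvPolynomial (Fin n) k))
    (hE : ∀ h : Fin n → kˣ, h ∈ G ↔ ∀ f ∈ E, MvPolynomial.eval (fun i => (h i : k)) f = 0)
    {x : Fin n → kˣ} (hx : x ∈ CC G) : x ∈ G := by
  rw [hE]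
  intro f hf
  have h1 : ∀ g ∈ G, evL g (theta k n f) = 0 := by
    intro g hg
    rw [evL_theta]
    exact (hE g).mp hg f hf
  have := hx (theta k n f) h1
  rwa [evL_theta] at this

end Stmt7Aux5

open Stmt7Aux Stmt7Aux2 Stmt7Aux3 Stmt7Aux4 Stmt7Aux5

/-- Proposition 1.13: for a subgroup `G` of the torus `H = (kˣ)ⁿ` acting on
the Laurent polynomial ring `R = k[y₁^{±1},…,yₙ^{±1}]` (`k` algebraically closed):
(a) `{(M : G) : M ∈ max R} = G-max R`;
(b) if `G` is Zariski closed in `H`, the fibers of `M ↦ (M : G)` on `max R` are exactly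
the `G`-orbits. -/
theorem stmt_7 {k : Type*} [Field k] [IsAlgClosed k] {n : ℕ}
    (G : Subgroup (Fin n → kˣ)) :
    -- (a)
    ({Q : Ideal (AddMonoidAlgebra k (Fin n → ℤ)) |
        ∃ M : Ideal (AddMonoidAlgebra k (Fin n → ℤ)), M.IsMaximal ∧ Q = resL G M}
      = {Q : Ideal (AddMonoidAlgebra k (Fin n → ℤ)) |
          IsGIdealL G Q ∧ Q ≠ ⊤ ∧ ∀ J, IsGIdealL G J → J ≠ ⊤ → Q ≤ J → J = Q}) ∧
    -- (b)
    ((∃ E : Set (MvPolynomial (Fin n) k), ∀ h : Fin n → kˣ,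
        h ∈ G ↔ ∀ f ∈ E, MvPolynomial.eval (fun i => (h i : k)) f = 0) →
      ∀ M M' : Ideal (AddMonoidAlgebra k (Fin n → ℤ)), M.IsMaximal → M'.IsMaximal →
        (resL G M = resL G M' ↔ ∃ g ∈ G, M' = Ideal.comap (lact g) M)) := by
  have resL_ne_top : ∀ p : Fin n → kˣ, resL G (MxL p) ≠ ⊤ := by
    intro p htop
    have h := resL_le_MxL G p
    rw [htop] at h
    exact (MxL_isMaximal p).ne_top (top_le_iff.mp h)
  constructor
  · ext Q
    simp only [Set.mem_setOf_eq]
    constructor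
    · rintro ⟨M, hM, rfl⟩
      obtain ⟨p, rfl⟩ := exists_MxL M hM
      refine ⟨isGIdealL_resL_MxL G p, resL_ne_top p, ?_⟩
      intro J hJ hJt hle
      obtain ⟨q, hq⟩ := gIdeal_le_resL G hJ hJt
      have h1 : resL G (MxL p) ≤ MxL q := le_trans hle (le_trans hq (resL_le_MxL G q))
      have h2 := resL_eq_of_le G h1
      exact le_antisymm (hq.trans h2.symm.le) hle
    · rintro ⟨hQG, hQt, hQmax⟩
      obtain ⟨q, hq⟩ := gIdeal_le_resL G hQG hQt
      have h3 : resL G (MxL q) = Q :=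
        hQmax _ (isGIdealL_resL_MxL G q) (resL_ne_top q) hq
      exact ⟨MxL q, MxL_isMaximal q, h3.symm⟩
  · rintro ⟨E, hE⟩ M M' hM hM'
    obtain ⟨p, rfl⟩ := exists_MxL M hM
    obtain ⟨q, rfl⟩ := exists_MxL M' hM'
    constructor
    · intro h
      have h1 : resL G (MxL p) ≤ MxL q := h ▸ resL_le_MxL G q
      have h' : ∀ f : RL k n, (∀ g ∈ G, evL (g * p) f = 0) → evL q f = 0 := by
        intro f hf
        exact (mem_MxL q f).mp (h1 ((mem_resL_MxL G p f).mpr hf))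
      have hc := mem_CC_of_le G h'
      have hg : q * p⁻¹ ∈ G := CC_subset_G G E hE hc
      refine ⟨q * p⁻¹, hg, ?_⟩
      rw [comap_lact_MxL, inv_mul_cancel_right]
    · rintro ⟨g, hg, hq⟩
      rw [comap_lact_MxL] at hq
      rw [hq, resL_MxL_mul G hg]
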